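/- arXiv:1608.01065 — 2 statements merged into one kernel-verified Lean document; each statement's English description precedes it below -/
import Mathlib

section
/- Define K_{ij} = (M_j^i)* ⊗ A_{ij} where A_{ij} = (Tr ρ_j)^{-1/2} (ρ_j^{1/2} ⊗ |i⟩⟨j|), and let Tr^{(2)} denote the partial trace over the second tensor factor: Tr^{(2)}(a ⊗ b) = Tr(b) a. Then ∑_{i,j} Tr^{(2)}(K_{ij} K_{ij}*) = I. -/
open Matrix Kronecker BigOperators ComplexOrder

/-- The square root of a positive semidefinite matrix, as defined in the older Mathlib
(removed since then). -/
noncomputable def Matrix.PosSemidef.sqrt {n 𝕜 : Type*} [Fintype n] [RCLike 𝕜] [DecidableEq n]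
    {A : Matrix n n 𝕜} (hA : Matrix.PosSemidef A) : Matrix n n 𝕜 :=
  hA.1.eigenvectorUnitary.1 * Matrix.diagonal ((↑) ∘ (√·) ∘ hA.1.eigenvalues) *
  (star hA.1.eigenvectorUnitary : Matrix n n 𝕜)

lemma Matrix.PosSemidef.sqrt_conjTranspose {n : Type*} [Fintype n] [DecidableEq n]
    {A : Matrix n n ℂ} (hA : Matrix.PosSemidef A) : (hA.sqrt)ᴴ = hA.sqrt := by
  simp only [Matrix.PosSemidef.sqrt, conjTranspose_mul, diagonal_conjTranspose, Matrix.star_eq_conjTranspose,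
    conjTranspose_conjTranspose, Matrix.mul_assoc]
  congr 2
  ext i j
  by_cases h : i = j <;> simp [h]

lemma Matrix.PosSemidef.sqrt_mul_self {n : Type*} [Fintype n] [DecidableEq n]
    {A : Matrix n n ℂ} (hA : Matrix.PosSemidef A) : hA.sqrt * hA.sqrt = A := by
  have hU : (star hA.1.eigenvectorUnitary : Matrix n n ℂ) * hA.1.eigenvectorUnitary.1 = 1 :=
    Unitary.star_mul_self_of_mem hA.1.eigenvectorUnitary.2
  conv_rhs => rw [hA.1.spectral_theorem, Unitary.conjStarAlgAut_apply]
  simp only [Matrix.PosSemidef.sqrt, Matrix.mul_assoc]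
  rw [← Matrix.mul_assoc _ _ (Matrix.diagonal _ * _), hU, Matrix.one_mul,
    ← Matrix.mul_assoc (Matrix.diagonal _), diagonal_mul_diagonal]
  congr 3
  ext i
  simp only [Function.comp]
  have h := congrArg (fun x : ℝ => (x : ℂ)) (Real.mul_self_sqrt (hA.eigenvalues_nonneg i))
  simpa using h

/-- Partial trace over the second tensor factor: `Tr⁽²⁾(a ⊗ b) = Tr(b) a`. -/
noncomputable def ptrace2 {α β : Type*} [Fintype β] (M : Matrix (α × β) (α × β) ℂ) : Matrix α α ℂ :=
  Matrix.of fun a a' => ∑ b, M (a, b) (a', b)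

lemma kron_conjTranspose {α β : Type*} (X : Matrix α α ℂ) (Y : Matrix β β ℂ) :
    (X ⊗ₖ Y)ᴴ = Xᴴ ⊗ₖ Yᴴ := by
  ext ⟨a, b⟩ ⟨a', b'⟩
  simp [conjTranspose_apply, kroneckerMap_apply, mul_comm]

lemma ptrace2_kron {α β : Type*} [Fintype β] (X : Matrix α α ℂ) (Y : Matrix β β ℂ) :
    ptrace2 (X ⊗ₖ Y) = Y.trace • X := by
  ext a a'
  simp [ptrace2, kroneckerMap_apply, Matrix.trace, Matrix.diag, Finset.mul_sum, mul_comm]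

lemma sum_std_diag {Λ : Type*} [Fintype Λ] [DecidableEq Λ] :
    ∑ j : Λ, Matrix.single j j (1 : ℂ) = 1 := by
  ext a b
  simp [Matrix.sum_apply, Matrix.single, Matrix.one_apply, ite_and,
    Finset.sum_ite_eq']

lemma std_conjTranspose {Λ : Type*} [DecidableEq Λ] (i j : Λ) :
    (Matrix.single i j (1 : ℂ))ᴴ = Matrix.single j i (1 : ℂ) := by
  ext a b
  by_cases h1 : j = a <;> by_cases h2 : i = b <;>
    simp [conjTranspose_apply, Matrix.single, h1, h2]

lemma trace_std_diag {Λ : Type*} [Fintype Λ] [DecidableEq Λ] (i : Λ) :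
    (Matrix.single i i (1 : ℂ)).trace = 1 := by
  simp [Matrix.trace, Matrix.diag, Matrix.single]

lemma sum_kron {ι α β : Type*} (s : Finset ι) (X : ι → Matrix α α ℂ) (Y : Matrix β β ℂ) :
    (∑ i ∈ s, X i) ⊗ₖ Y = ∑ i ∈ s, X i ⊗ₖ Y := by
  ext ⟨a, b⟩ ⟨a', b'⟩
  simp [kroneckerMap_apply, Matrix.sum_apply, Finset.sum_mul]

lemma kron_sum {ι α β : Type*} (s : Finset ι) (X : Matrix α α ℂ) (Y : ι → Matrix β β ℂ) :
    X ⊗ₖ (∑ i ∈ s, Y i) = ∑ i ∈ s, X ⊗ₖ Y i := by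
  ext ⟨a, b⟩ ⟨a', b'⟩
  simp [kroneckerMap_apply, Matrix.sum_apply, Finset.mul_sum]

/-- With `K_{ij} = (M_j^i)* ⊗ A_{ij}`,
`A_{ij} = (Tr ρ_j)^{-1/2}(ρ_j^{1/2} ⊗ |i⟩⟨j|)`, one has `∑_{i,j} Tr⁽²⁾(K_{ij} K_{ij}*) = 1`. -/
theorem oqrw_amplitude_normalization
    {n Λ : Type*} [Fintype n] [Fintype Λ] [DecidableEq n] [DecidableEq Λ]
    (B : Λ → Λ → Matrix n n ℂ)
    (hB : ∀ j, ∑ i, (B i j)ᴴ * B i j = 1)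
    (M : Λ → Λ → Matrix (n × Λ) (n × Λ) ℂ)
    (hM : ∀ i j, M i j = (B i j) ⊗ₖ (Matrix.single i j (1 : ℂ)))
    (ρf : Λ → Matrix n n ℂ)
    (hpos : ∀ j, (ρf j).PosSemidef)
    (htr : ∀ j, 0 < (ρf j).trace)
    (A : Λ → Λ → Matrix (n × Λ) (n × Λ) ℂ)
    (hA : ∀ i j, A i j
        = ((Real.sqrt ((ρf j).trace.re) : ℂ))⁻¹ •
            (((hpos j).sqrt) ⊗ₖ (Matrix.single i j (1 : ℂ))))
    (K : Λ → Λ → Matrix ((n × Λ) × (n × Λ)) ((n × Λ) × (n × Λ)) ℂ)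
    (hK : ∀ i j, K i j = (M i j)ᴴ ⊗ₖ A i j) :
    ∑ i, ∑ j, ptrace2 (K i j * (K i j)ᴴ) = 1 := by
  have htr_pos : ∀ j, 0 < (ρf j).trace.re := by
    intro j
    have := (Complex.lt_def.1 (htr j)).1
    simpa using this
  have htr_re : ∀ j, (ρf j).trace = ((ρf j).trace.re : ℂ) := by
    intro j
    have h := (Complex.lt_def.1 (htr j)).2
    simp only [Complex.zero_im] at h
    exact Complex.ext (by simp) (by simp [← h])
  -- trace of A i j * (A i j)ᴴ equals 1
  have hAA : ∀ i j, (A i j * (A i j)ᴴ).trace = 1 := by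
    intro i j
    have hs : ((hpos j).sqrt)ᴴ = (hpos j).sqrt := (hpos j).sqrt_conjTranspose
    rw [hA, conjTranspose_smul, kron_conjTranspose, smul_mul_smul_comm, hs,
      ← Matrix.mul_kronecker_mul, (hpos j).sqrt_mul_self, std_conjTranspose,
      Matrix.single_mul_single_same, mul_one, Matrix.trace_smul,
      Matrix.trace_kronecker, trace_std_diag, mul_one, htr_re j]
    rw [smul_eq_mul, ← Complex.ofReal_inv, Complex.star_def, Complex.conj_ofReal, htr_re j]
    norm_cast
    rw [← mul_inv, Real.mul_self_sqrt (htr_pos j).le,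
      inv_mul_cancel₀ (ne_of_gt (htr_pos j))]
  -- reduce the partial trace
  have hterm : ∀ i j, ptrace2 (K i j * (K i j)ᴴ) = (M i j)ᴴ * (M i j) := by
    intro i j
    rw [hK, kron_conjTranspose, ← Matrix.mul_kronecker_mul, conjTranspose_conjTranspose,
      ptrace2_kron, hAA, one_smul]
  simp only [hterm, hM, kron_conjTranspose, ← Matrix.mul_kronecker_mul, std_conjTranspose,
    Matrix.single_mul_single_same, one_mul]
  rw [Finset.sum_comm]
  calc ∑ j, ∑ i, ((B i j)ᴴ * B i j) ⊗ₖ Matrix.single j j (1:ℂ)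
      = ∑ j : Λ, (1 : Matrix n n ℂ) ⊗ₖ Matrix.single j j (1:ℂ) := by
        refine Finset.sum_congr rfl fun j _ => ?_
        rw [← sum_kron, hB]
    _ = 1 := by rw [← kron_sum, sum_std_diag, Matrix.one_kronecker_one]
end

section
/- With E(x ⊗ y) = ∑_{i,j} (M_j^i)* x M_j^i · Tr((ρ_j ⊗ |j⟩⟨j|) y)/Tr(ρ_j) and ρ = ∑_j ρ_j ⊗ |j⟩⟨j|, the two-point function satisfies Tr(ρ E(x₁ ⊗ E(x₂ ⊗ I))) = ∑_v Tr(ρ_v) ψ_v(x₁) ψ_v(x₂), where ψ_v(x) = (Tr ρ_v)^{-1} ∑_i Tr((B_v^i ρ_v (B_v^i)* ⊗ |i⟩⟨i|) x). -/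
open Matrix Kronecker BigOperators ComplexOrder

lemma kron_conjT {n Λ : Type*} [Fintype n] [Fintype Λ]
    (A : Matrix n n ℂ) (Bm : Matrix Λ Λ ℂ) : (A ⊗ₖ Bm)ᴴ = Aᴴ ⊗ₖ Bmᴴ := by
  ext ⟨a,b⟩ ⟨c,d⟩
  simp [Matrix.conjTranspose_apply, Matrix.kroneckerMap_apply]

lemma stdBM_conjT {Λ : Type*} [DecidableEq Λ] (i j : Λ) :
    (Matrix.single i j (1:ℂ))ᴴ = Matrix.single j i (1:ℂ) := by
  ext a b
  simp [Matrix.conjTranspose_apply, Matrix.single, and_comm]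

/-- The transition expectation
`E(x ⊗ y) = ∑_{i,j} (Tr((ρ_j ⊗ |j⟩⟨j|) y)/Tr ρ_j) • (M_j^i)* x M_j^i`. -/
noncomputable def transExp {n Λ : Type*} [Fintype n] [Fintype Λ] [DecidableEq n] [DecidableEq Λ]
    (B : Λ → Λ → Matrix n n ℂ) (ρf : Λ → Matrix n n ℂ)
    (x y : Matrix (n × Λ) (n × Λ) ℂ) : Matrix (n × Λ) (n × Λ) ℂ :=
  ∑ i, ∑ j,
    (((ρf j ⊗ₖ Matrix.single j j (1 : ℂ)) * y).trace / (ρf j).trace) •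
      (((B i j) ⊗ₖ Matrix.single i j (1 : ℂ))ᴴ * x *
        ((B i j) ⊗ₖ Matrix.single i j (1 : ℂ)))

lemma key {n Λ : Type*} [Fintype n] [Fintype Λ] [DecidableEq n] [DecidableEq Λ]
    (B : Λ → Λ → Matrix n n ℂ) (ρf : Λ → Matrix n n ℂ) (v i j : Λ)
    (x : Matrix (n × Λ) (n × Λ) ℂ) :
    ((ρf v ⊗ₖ Matrix.single v v (1 : ℂ)) *
      (((B i j) ⊗ₖ Matrix.single i j (1 : ℂ))ᴴ * x *
        ((B i j) ⊗ₖ Matrix.single i j (1 : ℂ)))).trace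
    = if v = j then (((B i j * ρf j * (B i j)ᴴ) ⊗ₖ Matrix.single i i (1 : ℂ)) * x).trace
      else 0 := by
  rw [Matrix.trace_mul_comm, mul_assoc, Matrix.trace_mul_comm, ← mul_assoc,
    kron_conjT, stdBM_conjT, ← Matrix.mul_kronecker_mul, ← Matrix.mul_kronecker_mul]
  by_cases h : v = j
  · subst h
    rw [Matrix.single_mul_single_same, Matrix.single_mul_single_same]
    norm_num
  · simp [Ne.symm h, h]

lemma sumlem {n Λ : Type*} [Fintype n] [Fintype Λ] [DecidableEq n] [DecidableEq Λ]
    (B : Λ → Λ → Matrix n n ℂ) (ρf : Λ → Matrix n n ℂ) (v : Λ)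
    (x y : Matrix (n × Λ) (n × Λ) ℂ) :
    ((ρf v ⊗ₖ Matrix.single v v (1 : ℂ)) * transExp B ρf x y).trace
    = (((ρf v ⊗ₖ Matrix.single v v (1 : ℂ)) * y).trace / (ρf v).trace) *
      ∑ i, (((B i v * ρf v * (B i v)ᴴ) ⊗ₖ Matrix.single i i (1 : ℂ)) * x).trace := by
  simp only [transExp, Finset.mul_sum, Matrix.mul_smul, Matrix.trace_sum, Matrix.trace_smul,
    smul_eq_mul, key, mul_ite, mul_zero, Finset.sum_ite_eq, Finset.mem_univ, if_true]

/-- The two-point function of the QMC: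
`Tr(ρ E(x₁ ⊗ E(x₂ ⊗ 1))) = ∑ v, Tr(ρ_v) ψ_v(x₁) ψ_v(x₂)` where
`ψ_v(x) = (Tr ρ_v)⁻¹ ∑ i, Tr((B_v^i ρ_v (B_v^i)* ⊗ |i⟩⟨i|) x)`. -/
theorem qmc_two_point_function
    {n Λ : Type*} [Fintype n] [Fintype Λ] [DecidableEq n] [DecidableEq Λ]
    (B : Λ → Λ → Matrix n n ℂ)
    (hB : ∀ j, ∑ i, (B i j)ᴴ * B i j = 1)
    (ρf : Λ → Matrix n n ℂ)
    (hpos : ∀ j, (ρf j).PosSemidef)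
    (htr : ∀ j, 0 < (ρf j).trace)
    (ρ : Matrix (n × Λ) (n × Λ) ℂ)
    (hρ : ρ = ∑ j, (ρf j) ⊗ₖ (Matrix.single j j (1 : ℂ)))
    (ψ : Λ → Matrix (n × Λ) (n × Λ) ℂ → ℂ)
    (hψ : ∀ v x, ψ v x = ((ρf v).trace)⁻¹ *
        ∑ i, (((B i v * ρf v * (B i v)ᴴ) ⊗ₖ Matrix.single i i (1 : ℂ)) * x).trace)
    (x₁ x₂ : Matrix (n × Λ) (n × Λ) ℂ) :
    (ρ * transExp B ρf x₁ (transExp B ρf x₂ 1)).trace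
      = ∑ v, (ρf v).trace * ψ v x₁ * ψ v x₂ := by
  rw [hρ, Finset.sum_mul, Matrix.trace_sum]
  refine Finset.sum_congr rfl (fun v _ => ?_)
  have t0 : (ρf v).trace ≠ 0 := (htr v).ne'
  rw [sumlem, sumlem, mul_one, Matrix.trace_kronecker, Matrix.trace_single_eq_same,
    hψ, hψ]
  field_simp
end
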